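/- For any set Γ of positive propositional formulas, the positive fragment of the superintuitionistic logic Int + Γ equals the positive logic Int⁺ + Γ; that is, (Int + Γ) ∩ Frm⁺ = Int⁺ + Γ, where Frm⁺ is the set of formulas built from ∧, ∨, → only. -/

import Mathlib

/-- Propositional formulas over ∧, ∨, →, ⊥ and variables. -/
inductive Fml : Type
  | var : ℕ → Fml
  | bot : Fml
  | and : Fml → Fml → Fml
  | or  : Fml → Fml → Fml
  | imp : Fml → Fml → Fml

namespace Fml

/-- A formula is positive if it contains no ⊥. -/
def Positive : Fml → Prop
  | var _ => True
  | bot => False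
  | and A B => A.Positive ∧ B.Positive
  | or A B => A.Positive ∧ B.Positive
  | imp A B => A.Positive ∧ B.Positive

/-- Evaluation in a Brouwerian (generalized Heyting) algebra, with a designated
value `z` interpreting ⊥. -/
def evalB {α : Type} [GeneralizedHeytingAlgebra α] (z : α) (ν : ℕ → α) : Fml → α
  | var n => ν n
  | bot => z
  | and A B => A.evalB z ν ⊓ B.evalB z ν
  | or A B => A.evalB z ν ⊔ B.evalB z ν
  | imp A B => A.evalB z ν ⇨ B.evalB z ν

/-- Evaluation in a Heyting algebra (⊥ interpreted as the least element). -/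
def eval {α : Type} [HeytingAlgebra α] (ν : ℕ → α) (A : Fml) : α := A.evalB ⊥ ν

/-- Evaluation of (positive) formulas in a Brouwerian algebra
(⊥ gets the junk value ⊤; it is irrelevant for positive formulas). -/
def pEval {α : Type} [GeneralizedHeytingAlgebra α] (ν : ℕ → α) (A : Fml) : α := A.evalB ⊤ ν

/-- Substitution. -/
def subst (σ : ℕ → Fml) : Fml → Fml
  | var n => σ n
  | bot => bot
  | and A B => and (A.subst σ) (B.subst σ)
  | or A B => or (A.subst σ) (B.subst σ)
  | imp A B => imp (A.subst σ) (B.subst σ)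

/-- Replacing every occurrence of ⊥ by the formula `C`. -/
def substBot : Fml → Fml → Fml
  | var n, _ => var n
  | bot, C => C
  | and A B, C => and (A.substBot C) (B.substBot C)
  | or A B, C => or (A.substBot C) (B.substBot C)
  | imp A B, C => imp (A.substBot C) (B.substBot C)

/-- The set of variables occurring in a formula. -/
def vars : Fml → Finset ℕ
  | var n => {n}
  | bot => ∅
  | and A B => A.vars ∪ B.vars
  | or A B => A.vars ∪ B.vars
  | imp A B => A.vars ∪ B.vars

end Fml

/-- The set of positive formulas. -/
def PosFml : Set Fml := {A | A.Positive}

/-- A substitution is positive if all its values are positive formulas. -/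
def PosSubst (σ : ℕ → Fml) : Prop := ∀ n, (σ n).Positive

/-- Validity of a formula in a Heyting algebra. -/
def ValidH (α : Type) [HeytingAlgebra α] (A : Fml) : Prop := ∀ ν : ℕ → α, A.eval ν = ⊤

/-- Intuitionistic propositional logic (via algebraic semantics). -/
def IntL : Set Fml := {A | ∀ (α : Type) [HeytingAlgebra α], ValidH α A}

/-- Superintuitionistic logics. -/
structure IsSILogic (L : Set Fml) : Prop where
  int_sub : IntL ⊆ L
  mp : ∀ A B : Fml, Fml.imp A B ∈ L → A ∈ L → B ∈ L
  subst_closed : ∀ A ∈ L, ∀ σ : ℕ → Fml, A.subst σ ∈ L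

/-- The least superintuitionistic logic containing `Γ`. -/
def IntPlus (Γ : Set Fml) : Set Fml := ⋂₀ {L | IsSILogic L ∧ Γ ⊆ L}

/-- The positive fragment of intuitionistic logic. -/
def IntLPos : Set Fml := IntL ∩ PosFml

/-- Positive logics. -/
structure IsPosLogic (P : Set Fml) : Prop where
  pos : P ⊆ PosFml
  int_sub : IntLPos ⊆ P
  mp : ∀ A B : Fml, Fml.imp A B ∈ P → A ∈ P → B ∈ P
  subst_closed : ∀ A ∈ P, ∀ σ : ℕ → Fml, PosSubst σ → A.subst σ ∈ P

/-- The least positive logic containing `Γ`. -/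
def IntPosPlus (Γ : Set Fml) : Set Fml := ⋂₀ {P | IsPosLogic P ∧ Γ ⊆ P}

/-- Homomorphism of Brouwerian algebras (preserves ⊓, ⊔, ⇨, ⊤). -/
def IsBrHom {α β : Type} [GeneralizedHeytingAlgebra α] [GeneralizedHeytingAlgebra β]
    (f : α → β) : Prop :=
  (∀ a b : α, f (a ⊓ b) = f a ⊓ f b) ∧ (∀ a b : α, f (a ⊔ b) = f a ⊔ f b) ∧
  (∀ a b : α, f (a ⇨ b) = f a ⇨ f b) ∧ f ⊤ = ⊤

/-- A Heyting algebra is a model of a set of formulas `T`. -/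
def Models (α : Type) [HeytingAlgebra α] (T : Set Fml) : Prop := ∀ A ∈ T, ValidH α A

/-- The variety (of Heyting algebras) axiomatized by `T` is B-saturated: any Heyting
algebra whose Brouwerian reduct embeds into the reduct of a model of `T` is itself
a model of `T`. -/
def BSaturated (T : Set Fml) : Prop :=
  ∀ (α : Type) (iα : HeytingAlgebra α),
    (∃ (β : Type) (iβ : HeytingAlgebra β), @Models β iβ T ∧
      ∃ f : α → β, Function.Injective f ∧
        @IsBrHom α β iα.toGeneralizedHeytingAlgebra iβ.toGeneralizedHeytingAlgebra f) →
    @Models α iα T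

/-- A subset of a Brouwerian algebra closed under the Brouwerian operations. -/
def BrClosed {α : Type} [GeneralizedHeytingAlgebra α] (S : Set α) : Prop :=
  ⊤ ∈ S ∧ ∀ a ∈ S, ∀ b ∈ S, a ⊓ b ∈ S ∧ a ⊔ b ∈ S ∧ (a ⇨ b) ∈ S

/-- The Brouwerian subalgebra generated by a set. -/
def genBr {α : Type} [GeneralizedHeytingAlgebra α] (s : Set α) : Set α :=
  ⋂₀ {S | BrClosed S ∧ s ⊆ S}

/-- Conjunction of a list of variables (nonempty case is the intended one). -/
def conjList : List ℕ → Fml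
  | [] => Fml.imp (Fml.var 0) (Fml.var 0)
  | [n] => Fml.var n
  | n :: l => Fml.and (Fml.var n) (conjList l)

/-- The conjunction π^∧ of all variables in a finite set π. -/
def conjOf (π : Finset ℕ) : Fml := conjList (π.sort (· ≤ ·))

/-- Multiple-conclusion rules. -/
def MRule : Type := Finset Fml × Finset Fml

/-- A rule is positive if all its premises and conclusions are positive. -/
def PosRule (r : MRule) : Prop := (∀ A ∈ r.1, A.Positive) ∧ (∀ B ∈ r.2, B.Positive)

/-- Validity of a (positive) m-rule in a Brouwerian algebra. -/
def RuleValid (α : Type) [GeneralizedHeytingAlgebra α] (r : MRule) : Prop :=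
  ∀ ν : ℕ → α, (∀ A ∈ r.1, A.pEval ν = ⊤) → ∃ B ∈ r.2, B.pEval ν = ⊤

/-- A Brouwerian algebra is a model of a set of positive formulas. -/
def ModelsP (β : Type) [GeneralizedHeytingAlgebra β] (P : Set Fml) : Prop :=
  ∀ A ∈ P, ∀ ν : ℕ → β, A.pEval ν = ⊤

/-- Filter of a Brouwerian (or Heyting) algebra. -/
def IsFilter' {α : Type} [GeneralizedHeytingAlgebra α] (F : Set α) : Prop :=
  ⊤ ∈ F ∧ ∀ a b : α, a ∈ F → (a ⇨ b) ∈ F → b ∈ F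

/-! ### Auxiliary development -/

namespace Fml

lemma positive_subst : ∀ {A : Fml}, A.Positive → ∀ {σ : ℕ → Fml}, PosSubst σ →
    (A.subst σ).Positive
  | var n, _, _, hσ => hσ n
  | bot, hA, _, _ => hA.elim
  | and A B, hA, _, hσ => ⟨positive_subst hA.1 hσ, positive_subst hA.2 hσ⟩
  | or A B, hA, _, hσ => ⟨positive_subst hA.1 hσ, positive_subst hA.2 hσ⟩
  | imp A B, hA, _, hσ => ⟨positive_subst hA.1 hσ, positive_subst hA.2 hσ⟩

/-- Shift all variables up by one and replace ⊥ by the variable 0. -/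
def tr : Fml → Fml
  | var n => var (n + 1)
  | bot => var 0
  | and A B => and A.tr B.tr
  | or A B => or A.tr B.tr
  | imp A B => imp A.tr B.tr

lemma tr_positive : ∀ A : Fml, A.tr.Positive
  | var _ => trivial
  | bot => trivial
  | and A B => ⟨tr_positive A, tr_positive B⟩
  | or A B => ⟨tr_positive A, tr_positive B⟩
  | imp A B => ⟨tr_positive A, tr_positive B⟩

lemma evalB_tr {α : Type} [GeneralizedHeytingAlgebra α] (z : α) (ν : ℕ → α) :
    ∀ A : Fml, A.tr.evalB z ν = A.evalB (ν 0) (fun n => ν (n + 1))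
  | var n => rfl
  | bot => rfl
  | and A B => by simp [tr, evalB, evalB_tr z ν A, evalB_tr z ν B]
  | or A B => by simp [tr, evalB, evalB_tr z ν A, evalB_tr z ν B]
  | imp A B => by simp [tr, evalB, evalB_tr z ν A, evalB_tr z ν B]

lemma evalB_pos_congr {α : Type} [GeneralizedHeytingAlgebra α] (z z' : α) (ν : ℕ → α) :
    ∀ {A : Fml}, A.Positive → A.evalB z ν = A.evalB z' ν
  | var n, _ => rfl
  | bot, h => h.elim
  | and A B, h => by simp [evalB, evalB_pos_congr z z' ν h.1, evalB_pos_congr z z' ν h.2]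
  | or A B, h => by simp [evalB, evalB_pos_congr z z' ν h.1, evalB_pos_congr z z' ν h.2]
  | imp A B, h => by simp [evalB, evalB_pos_congr z z' ν h.1, evalB_pos_congr z z' ν h.2]

lemma subst_id_on : ∀ {A : Fml} {σ : ℕ → Fml}, (∀ n ∈ A.vars, σ n = var n) → A.subst σ = A
  | var n, σ, h => h n (by simp [vars])
  | bot, σ, h => rfl
  | and A B, σ, h => by
      simp only [subst]
      rw [subst_id_on (fun n hn => h n (by simp [vars, hn])),
        subst_id_on (fun n hn => h n (by simp [vars, hn]))]
  | or A B, σ, h => by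
      simp only [subst]
      rw [subst_id_on (fun n hn => h n (by simp [vars, hn])),
        subst_id_on (fun n hn => h n (by simp [vars, hn]))]
  | imp A B, σ, h => by
      simp only [subst]
      rw [subst_id_on (fun n hn => h n (by simp [vars, hn])),
        subst_id_on (fun n hn => h n (by simp [vars, hn]))]

lemma vars_tr : ∀ (A : Fml), ∀ n ∈ A.tr.vars, n = 0 ∨ ∃ m ∈ A.vars, n = m + 1
  | var k, n, hn => by
      simp [tr, vars] at hn
      exact Or.inr ⟨k, by simp [vars], hn⟩
  | bot, n, hn => by simp [tr, vars] at hn; exact Or.inl hn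
  | and A B, n, hn => by
      simp only [tr, vars, Finset.mem_union] at hn
      rcases hn with hn | hn
      · rcases vars_tr A n hn with h | ⟨m, hm, h⟩
        · exact Or.inl h
        · exact Or.inr ⟨m, by simp [vars, hm], h⟩
      · rcases vars_tr B n hn with h | ⟨m, hm, h⟩
        · exact Or.inl h
        · exact Or.inr ⟨m, by simp [vars, hm], h⟩
  | or A B, n, hn => by
      simp only [tr, vars, Finset.mem_union] at hn
      rcases hn with hn | hn
      · rcases vars_tr A n hn with h | ⟨m, hm, h⟩
        · exact Or.inl h
        · exact Or.inr ⟨m, by simp [vars, hm], h⟩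
      · rcases vars_tr B n hn with h | ⟨m, hm, h⟩
        · exact Or.inl h
        · exact Or.inr ⟨m, by simp [vars, hm], h⟩
  | imp A B, n, hn => by
      simp only [tr, vars, Finset.mem_union] at hn
      rcases hn with hn | hn
      · rcases vars_tr A n hn with h | ⟨m, hm, h⟩
        · exact Or.inl h
        · exact Or.inr ⟨m, by simp [vars, hm], h⟩
      · rcases vars_tr B n hn with h | ⟨m, hm, h⟩
        · exact Or.inl h
        · exact Or.inr ⟨m, by simp [vars, hm], h⟩

/-- The substitution companion of `tr`. -/
def starSub (σ : ℕ → Fml) : ℕ → Fml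
  | 0 => var 0
  | n + 1 => (σ n).tr

lemma starSub_pos (σ : ℕ → Fml) : PosSubst (starSub σ) := by
  intro n
  cases n with
  | zero => trivial
  | succ n => exact tr_positive (σ n)

lemma tr_subst (σ : ℕ → Fml) : ∀ A : Fml, (A.subst σ).tr = A.tr.subst (starSub σ)
  | var n => rfl
  | bot => rfl
  | and A B => by simp [tr, subst, tr_subst σ A, tr_subst σ B]
  | or A B => by simp [tr, subst, tr_subst σ A, tr_subst σ B]
  | imp A B => by simp [tr, subst, tr_subst σ A, tr_subst σ B]

lemma untr {υ : ℕ → Fml} (hυ : ∀ n, υ (n + 1) = var n) :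
    ∀ {A : Fml}, A.Positive → A.tr.subst υ = A
  | var n, _ => hυ n
  | bot, h => h.elim
  | and A B, h => by simp [tr, subst, untr hυ h.1, untr hυ h.2]
  | or A B, h => by simp [tr, subst, untr hυ h.1, untr hυ h.2]
  | imp A B, h => by simp [tr, subst, untr hυ h.1, untr hυ h.2]

lemma vars_subst_sub (σ : ℕ → Fml) :
    ∀ {A : Fml} {n : ℕ}, n ∈ A.vars → (σ n).vars ⊆ (A.subst σ).vars
  | var k, n, hn => by
      simp [vars] at hn; subst hn; simp [subst]
  | bot, n, hn => by simp [vars] at hn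
  | and A B, n, hn => by
      simp only [vars, Finset.mem_union] at hn
      rcases hn with hn | hn
      · exact (vars_subst_sub σ hn).trans (by simp [subst, vars, Finset.subset_union_left])
      · exact (vars_subst_sub σ hn).trans (by simp [subst, vars, Finset.subset_union_right])
  | or A B, n, hn => by
      simp only [vars, Finset.mem_union] at hn
      rcases hn with hn | hn
      · exact (vars_subst_sub σ hn).trans (by simp [subst, vars, Finset.subset_union_left])
      · exact (vars_subst_sub σ hn).trans (by simp [subst, vars, Finset.subset_union_right])
  | imp A B, n, hn => by
      simp only [vars, Finset.mem_union] at hn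
      rcases hn with hn | hn
      · exact (vars_subst_sub σ hn).trans (by simp [subst, vars, Finset.subset_union_left])
      · exact (vars_subst_sub σ hn).trans (by simp [subst, vars, Finset.subset_union_right])

/-- If `x` is below the value of every variable of a positive formula, it is below
the value of the formula. -/
lemma belowGen {α : Type} [GeneralizedHeytingAlgebra α] (z : α) (ν : ℕ → α) {x : α} :
    ∀ {A : Fml}, A.Positive → (∀ n ∈ A.vars, x ≤ ν n) → x ≤ A.evalB z ν
  | var n, _, h => h n (by simp [vars])
  | bot, hp, _ => hp.elim
  | and A B, hp, h => le_inf
      (belowGen z ν hp.1 (fun n hn => h n (by simp [vars, hn])))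
      (belowGen z ν hp.2 (fun n hn => h n (by simp [vars, hn])))
  | or A B, hp, h =>
      (belowGen z ν hp.1 (fun n hn => h n (by simp [vars, hn]))).trans le_sup_left
  | imp A B, hp, h =>
      (belowGen z ν hp.2 (fun n hn => h n (by simp [vars, hn]))).trans le_himp

end Fml

lemma conjList_positive : ∀ l : List ℕ, (conjList l).Positive
  | [] => ⟨trivial, trivial⟩
  | [n] => trivial
  | n :: m :: l => ⟨trivial, conjList_positive (m :: l)⟩

lemma conjOf_positive (π : Finset ℕ) : (conjOf π).Positive := conjList_positive _

lemma conjList_le {α : Type} [GeneralizedHeytingAlgebra α] (z : α) (ν : ℕ → α) :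
    ∀ (l : List ℕ), ∀ n ∈ l, (conjList l).evalB z ν ≤ ν n
  | [], n, hn => by simp at hn
  | [m], n, hn => by
      simp at hn; subst hn; exact le_rfl
  | m :: k :: l, n, hn => by
      rcases List.mem_cons.mp hn with h | h
      · subst h
        exact inf_le_left
      · exact le_trans inf_le_right (conjList_le z ν (k :: l) n h)

lemma conjList_subst_ge {α : Type} [GeneralizedHeytingAlgebra α] (z : α) (ν : ℕ → α)
    {x : α} {σ : ℕ → Fml} :
    ∀ (l : List ℕ), (∀ n ∈ l, x ≤ (σ n).evalB z ν) →
      x ≤ ((conjList l).subst σ).evalB z ν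
  | [], _ => by
      show x ≤ (σ 0).evalB z ν ⇨ (σ 0).evalB z ν
      simp
  | [m], h => h m (by simp)
  | m :: k :: l, h => le_inf (h m (by simp))
      (conjList_subst_ge z ν (k :: l) (fun n hn => h n (List.mem_cons_of_mem _ hn)))

/-- The conjunction of all variables `n+1` for `n ∈ π`. -/
def shiftConj (π : Finset ℕ) : Fml := conjList ((π.sort (· ≤ ·)).map (· + 1))

/-- The guard formula `0 → ⋀_{n ∈ π} (n+1)`. -/
def gd (π : Finset ℕ) : Fml := Fml.imp (Fml.var 0) (shiftConj π)

lemma gd_positive (π : Finset ℕ) : (gd π).Positive :=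
  ⟨trivial, conjList_positive _⟩

lemma shiftConj_le {α : Type} [GeneralizedHeytingAlgebra α] (z : α) (ν : ℕ → α)
    {π : Finset ℕ} {m : ℕ} (hm : m ∈ π) :
    (shiftConj π).evalB z ν ≤ ν (m + 1) :=
  conjList_le z ν _ (m + 1)
    (List.mem_map_of_mem (f := (· + 1)) ((Finset.mem_sort (α := ℕ) (· ≤ ·)).mpr hm))

lemma gd_inf_le {α : Type} [GeneralizedHeytingAlgebra α] (z : α) (ν : ℕ → α)
    {π : Finset ℕ} {m : ℕ} (hm : m ∈ π) :
    (gd π).evalB z ν ⊓ ν 0 ≤ ν (m + 1) := by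
  have h1 : (gd π).evalB z ν ⊓ ν 0 ≤ (shiftConj π).evalB z ν := by
    show (ν 0 ⇨ (shiftConj π).evalB z ν) ⊓ ν 0 ≤ _
    exact himp_inf_le
  exact h1.trans (shiftConj_le z ν hm)

/-! ### The nucleus construction -/

section Nuc

variable {α : Type} [GeneralizedHeytingAlgebra α]

lemma himp_himp_self (d a : α) : d ⇨ (d ⇨ a) = d ⇨ a := by
  rw [himp_himp, inf_idem]

/-- Fixpoints of the open nucleus `d ⇨ ·` that lie above `d ⇨ v`. -/
def Nuc (α : Type) [GeneralizedHeytingAlgebra α] (d v : α) : Type :=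
  {a : α // d ⇨ a = a ∧ d ⇨ v ≤ a}

variable {d v : α}

instance : PartialOrder (Nuc α d v) := Subtype.partialOrder _

instance : Lattice (Nuc α d v) where
  inf a b := ⟨a.1 ⊓ b.1, by rw [himp_inf_distrib, a.2.1, b.2.1], le_inf a.2.2 b.2.2⟩
  sup a b := ⟨d ⇨ (a.1 ⊔ b.1), himp_himp_self d _,
    a.2.2.trans (le_trans le_sup_left le_himp)⟩
  inf_le_left a b := show a.1 ⊓ b.1 ≤ a.1 from inf_le_left
  inf_le_right a b := show a.1 ⊓ b.1 ≤ b.1 from inf_le_right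
  le_inf a b c h1 h2 := show a.1 ≤ b.1 ⊓ c.1 from le_inf h1 h2
  le_sup_left a b := show a.1 ≤ d ⇨ (a.1 ⊔ b.1) from le_trans le_sup_left le_himp
  le_sup_right a b := show b.1 ≤ d ⇨ (a.1 ⊔ b.1) from le_trans le_sup_right le_himp
  sup_le a b c h1 h2 := show d ⇨ (a.1 ⊔ b.1) ≤ c.1 by
    rw [← c.2.1]; exact himp_le_himp_left (sup_le h1 h2)

lemma nuc_himp_mem (a b : Nuc α d v) :
    d ⇨ (a.1 ⇨ b.1) = a.1 ⇨ b.1 ∧ d ⇨ v ≤ a.1 ⇨ b.1 := by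
  constructor
  · rw [himp_himp, inf_comm, ← himp_himp, b.2.1]
  · exact b.2.2.trans le_himp

instance : GeneralizedHeytingAlgebra (Nuc α d v) where
  top := ⟨⊤, by simp, le_top⟩
  le_top a := show a.1 ≤ ⊤ from le_top
  himp a b := ⟨a.1 ⇨ b.1, nuc_himp_mem a b⟩
  le_himp_iff a b c := by
    show a.1 ≤ b.1 ⇨ c.1 ↔ a.1 ⊓ b.1 ≤ c.1
    exact le_himp_iff

instance : HeytingAlgebra (Nuc α d v) where
  bot := ⟨d ⇨ v, himp_himp_self d v, le_rfl⟩
  bot_le a := a.2.2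
  compl a := a ⇨ ⟨d ⇨ v, himp_himp_self d v, le_rfl⟩
  himp_bot a := rfl

end Nuc

/-! ### `IntL` facts -/

lemma gd_tr_mem_IntL {π : Finset ℕ} {B : Fml} (hB : B ∈ IntL) (hv : B.vars ⊆ π) :
    Fml.imp (gd π) B.tr ∈ IntL := by
  intro α _ ν
  show (Fml.imp (gd π) B.tr).evalB ⊥ ν = ⊤
  show (gd π).evalB ⊥ ν ⇨ B.tr.evalB ⊥ ν = ⊤
  rw [himp_eq_top_iff, Fml.evalB_tr]
  set d := (gd π).evalB (⊥ : α) ν with hd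
  set ν' : ℕ → α := fun n => ν (n + 1) with hν'
  -- valuation into the nucleus algebra
  have hmem : ∀ p ∈ π, d ⇨ ν 0 ≤ d ⇨ ν' p := by
    intro p hp
    rw [le_himp_iff, inf_comm, inf_himp]
    exact gd_inf_le ⊥ ν hp
  let nv : ℕ → Nuc α d (ν 0) := fun p =>
    if hp : p ∈ π then ⟨d ⇨ ν' p, himp_himp_self d _, hmem p hp⟩ else ⊤
  have main : ∀ C : Fml, C.vars ⊆ π →
      (C.evalB (⊥ : Nuc α d (ν 0)) nv).1 = d ⇨ C.evalB (ν 0) ν' := by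
    intro C
    induction C with
    | var p =>
        intro h
        have hp : p ∈ π := h (by simp [Fml.vars])
        show (nv p).1 = _
        simp only [nv, dif_pos hp]
        have e : nv p = ⟨d ⇨ ν' p, himp_himp_self d _, hmem p hp⟩ := dif_pos hp
        exact congrArg Subtype.val e
    | bot => intro _; rfl
    | and A B ihA ihB =>
        intro h
        rw [Fml.vars, Finset.union_subset_iff] at h
        show (A.evalB _ nv ⊓ B.evalB _ nv).1 = _
        show (A.evalB _ nv).1 ⊓ (B.evalB _ nv).1 = _
        rw [ihA h.1, ihB h.2, ← himp_inf_distrib]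
        rfl
    | or A B ihA ihB =>
        intro h
        rw [Fml.vars, Finset.union_subset_iff] at h
        show d ⇨ ((A.evalB _ nv).1 ⊔ (B.evalB _ nv).1) = _
        rw [ihA h.1, ihB h.2]
        apply le_antisymm
        · have h1 : (d ⇨ A.evalB (ν 0) ν') ⊔ (d ⇨ B.evalB (ν 0) ν') ≤
              d ⇨ (A.evalB (ν 0) ν' ⊔ B.evalB (ν 0) ν') :=
            sup_le (himp_le_himp_left le_sup_left) (himp_le_himp_left le_sup_right)
          calc d ⇨ ((d ⇨ A.evalB (ν 0) ν') ⊔ (d ⇨ B.evalB (ν 0) ν'))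
              ≤ d ⇨ (d ⇨ (A.evalB (ν 0) ν' ⊔ B.evalB (ν 0) ν')) := himp_le_himp_left h1
            _ = d ⇨ (A.evalB (ν 0) ν' ⊔ B.evalB (ν 0) ν') := himp_himp_self d _
        · exact himp_le_himp_left (sup_le_sup le_himp le_himp)
    | imp A B ihA ihB =>
        intro h
        rw [Fml.vars, Finset.union_subset_iff] at h
        show (A.evalB _ nv).1 ⇨ (B.evalB _ nv).1 = _
        rw [ihA h.1, ihB h.2]
        show _ = d ⇨ (A.evalB (ν 0) ν' ⇨ B.evalB (ν 0) ν')
        rw [himp_himp, himp_himp, inf_comm (d ⇨ A.evalB (ν 0) ν') d, inf_himp]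
  have hval : B.evalB (⊥ : Nuc α d (ν 0)) nv = ⊤ := hB (Nuc α d (ν 0)) nv
  have hmain := main B hv
  rw [hval] at hmain
  exact himp_eq_top_iff.mp hmain.symm

lemma tautK (X Y : Fml) : Fml.imp X (Fml.imp Y X) ∈ IntL := by
  intro α _ ν
  show X.evalB ⊥ ν ⇨ (Y.evalB ⊥ ν ⇨ X.evalB ⊥ ν) = ⊤
  rw [himp_eq_top_iff]
  exact le_himp

lemma tautS (G X Y : Fml) :
    Fml.imp (Fml.imp G (Fml.imp X Y)) (Fml.imp (Fml.imp G X) (Fml.imp G Y)) ∈ IntL := by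
  intro α _ ν
  show (G.evalB ⊥ ν ⇨ (X.evalB ⊥ ν ⇨ Y.evalB ⊥ ν)) ⇨
    ((G.evalB ⊥ ν ⇨ X.evalB ⊥ ν) ⇨ (G.evalB ⊥ ν ⇨ Y.evalB ⊥ ν)) = ⊤
  set g := G.evalB ⊥ ν; set x := X.evalB ⊥ ν; set y := Y.evalB ⊥ ν
  rw [himp_eq_top_iff, le_himp_iff, le_himp_iff]
  have h1 : (g ⇨ x ⇨ y) ⊓ (g ⇨ x) ⊓ g ≤ x ⇨ y :=
    le_trans (inf_le_inf_right g inf_le_left) himp_inf_le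
  have h2 : (g ⇨ x ⇨ y) ⊓ (g ⇨ x) ⊓ g ≤ x :=
    le_trans (inf_le_inf_right g inf_le_right) himp_inf_le
  exact le_trans (le_inf h1 h2) himp_inf_le

lemma tautB (W T G : Fml) :
    Fml.imp (Fml.imp W T) (Fml.imp (Fml.imp G W) (Fml.imp G T)) ∈ IntL := by
  intro α _ ν
  show (W.evalB ⊥ ν ⇨ T.evalB ⊥ ν) ⇨
    ((G.evalB ⊥ ν ⇨ W.evalB ⊥ ν) ⇨ (G.evalB ⊥ ν ⇨ T.evalB ⊥ ν)) = ⊤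
  set g := G.evalB ⊥ ν; set w := W.evalB ⊥ ν; set t := T.evalB ⊥ ν
  rw [himp_eq_top_iff, le_himp_iff, le_himp_iff]
  have h1 : (w ⇨ t) ⊓ (g ⇨ w) ⊓ g ≤ w :=
    le_trans (inf_le_inf_right g inf_le_right) himp_inf_le
  exact le_trans (le_inf (le_trans inf_le_left inf_le_left) h1) himp_inf_le

lemma tr_eq_subst_shift : ∀ {A : Fml}, A.Positive →
    A.tr = A.subst (fun n => Fml.var (n + 1))
  | Fml.var n, _ => rfl
  | Fml.bot, h => h.elim
  | Fml.and A B, h => by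
      simp [Fml.tr, Fml.subst, tr_eq_subst_shift h.1, tr_eq_subst_shift h.2]
  | Fml.or A B, h => by
      simp [Fml.tr, Fml.subst, tr_eq_subst_shift h.1, tr_eq_subst_shift h.2]
  | Fml.imp A B, h => by
      simp [Fml.tr, Fml.subst, tr_eq_subst_shift h.1, tr_eq_subst_shift h.2]

lemma mem_P_of_IntL {P : Set Fml} (hP : IsPosLogic P) {X : Fml} (h1 : X ∈ IntL)
    (h2 : X.Positive) : X ∈ P := hP.int_sub ⟨h1, h2⟩

/-- The auxiliary superintuitionistic logic associated to a positive logic `P`. -/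
def SLog (P : Set Fml) : Set Fml :=
  {B | ∀ π : Finset ℕ, B.vars ⊆ π → Fml.imp (gd π) B.tr ∈ P}

lemma SLog_isSI {P : Set Fml} (hP : IsPosLogic P) : IsSILogic (SLog P) := by
  constructor
  · -- IntL ⊆ SLog P
    intro B hB π hπ
    exact mem_P_of_IntL hP (gd_tr_mem_IntL hB hπ) ⟨gd_positive π, Fml.tr_positive B⟩
  · -- modus ponens
    intro B C hBC hB π hπ
    set π' := π ∪ B.vars with hπ'
    have hvB : B.vars ⊆ π' := Finset.subset_union_right
    have hvBC : (Fml.imp B C).vars ⊆ π' := by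
      show B.vars ∪ C.vars ⊆ π ∪ B.vars
      exact Finset.union_subset Finset.subset_union_right
        (hπ.trans Finset.subset_union_left)
    have h1 : Fml.imp (gd π') (Fml.imp B.tr C.tr) ∈ P := hBC π' hvBC
    have h2 : Fml.imp (gd π') B.tr ∈ P := hB π' hvB
    have hS : Fml.imp (Fml.imp (gd π') (Fml.imp B.tr C.tr))
        (Fml.imp (Fml.imp (gd π') B.tr) (Fml.imp (gd π') C.tr)) ∈ P :=
      mem_P_of_IntL hP (tautS (gd π') B.tr C.tr)
        ⟨⟨gd_positive _, Fml.tr_positive _, Fml.tr_positive _⟩,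
          ⟨gd_positive _, Fml.tr_positive _⟩, gd_positive _, Fml.tr_positive _⟩
    have h3 : Fml.imp (gd π') C.tr ∈ P := hP.mp _ _ (hP.mp _ _ hS h1) h2
    -- kill the extra guards by substituting `var 0` for variables outside π
    set τ : ℕ → Fml := fun k => if 0 < k ∧ k - 1 ∈ π then Fml.var k else Fml.var 0 with hτ
    have hτpos : PosSubst τ := by
      intro k
      by_cases h : 0 < k ∧ k - 1 ∈ π <;> simp [τ, h] <;> trivial
    have h4 := hP.subst_closed _ h3 τ hτpos
    have h5 : (C.tr).subst τ = C.tr := Fml.subst_id_on (by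
      intro k hk
      rcases Fml.vars_tr C k hk with rfl | ⟨m, hm, rfl⟩
      · simp [τ]
      · have hmπ : m ∈ π := hπ hm
        simp [τ, hmπ])
    rw [show (Fml.imp (gd π') C.tr).subst τ
        = Fml.imp ((gd π').subst τ) C.tr from by simp [Fml.subst, h5]] at h4
    have hW : Fml.imp (gd π) ((gd π').subst τ) ∈ P := by
      apply mem_P_of_IntL hP
      · intro α _ ν
        show (gd π).evalB ⊥ ν ⇨ ((gd π').subst τ).evalB ⊥ ν = ⊤
        rw [himp_eq_top_iff]
        show _ ≤ ((τ 0).evalB ⊥ ν) ⇨ ((shiftConj π').subst τ).evalB ⊥ ν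
        have hτ0 : τ 0 = Fml.var 0 := by simp [τ]
        rw [hτ0, le_himp_iff]
        apply conjList_subst_ge
        intro k hk
        rcases List.mem_map.mp hk with ⟨m, hmem', rfl⟩
        by_cases hmπ : m ∈ π
        · rw [show τ (m + 1) = Fml.var (m + 1) from by simp [τ, hmπ]]
          exact gd_inf_le ⊥ ν hmπ
        · rw [show τ (m + 1) = Fml.var 0 from by simp [τ, hmπ]]
          exact inf_le_right
      · exact ⟨gd_positive _, Fml.positive_subst (gd_positive _) hτpos⟩
    have hBc : Fml.imp (Fml.imp ((gd π').subst τ) C.tr)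
        (Fml.imp (Fml.imp (gd π) ((gd π').subst τ)) (Fml.imp (gd π) C.tr)) ∈ P :=
      mem_P_of_IntL hP (tautB ((gd π').subst τ) C.tr (gd π))
        ⟨⟨Fml.positive_subst (gd_positive _) hτpos, Fml.tr_positive _⟩,
          ⟨gd_positive _, Fml.positive_subst (gd_positive _) hτpos⟩,
          gd_positive _, Fml.tr_positive _⟩
    exact hP.mp _ _ (hP.mp _ _ hBc h4) hW
  · -- substitution
    intro B hB σ π hπ
    have h1 : Fml.imp (gd B.vars) B.tr ∈ P := hB B.vars (le_refl _)
    have h2 := hP.subst_closed _ h1 (Fml.starSub σ) (Fml.starSub_pos σ)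
    have h3 : (Fml.imp (gd B.vars) B.tr).subst (Fml.starSub σ)
        = Fml.imp ((gd B.vars).subst (Fml.starSub σ)) (B.subst σ).tr := by
      simp [Fml.subst, Fml.tr_subst]
    rw [h3] at h2
    have hW : Fml.imp (gd π) ((gd B.vars).subst (Fml.starSub σ)) ∈ P := by
      apply mem_P_of_IntL hP
      · intro α _ ν
        show (gd π).evalB ⊥ ν ⇨ ((gd B.vars).subst (Fml.starSub σ)).evalB ⊥ ν = ⊤
        rw [himp_eq_top_iff]
        show _ ≤ (ν 0) ⇨ ((shiftConj B.vars).subst (Fml.starSub σ)).evalB ⊥ ν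
        rw [le_himp_iff]
        apply conjList_subst_ge
        intro k hk
        rcases List.mem_map.mp hk with ⟨m, hmem', rfl⟩
        have hmB : m ∈ B.vars := (Finset.mem_sort _).mp hmem'
        show _ ≤ (σ m).tr.evalB ⊥ ν
        apply Fml.belowGen ⊥ ν (Fml.tr_positive (σ m))
        intro n hn
        rcases Fml.vars_tr (σ m) n hn with rfl | ⟨t, ht, rfl⟩
        · exact inf_le_right
        · have htπ : t ∈ π := hπ (Fml.vars_subst_sub σ hmB ht)
          exact gd_inf_le ⊥ ν htπ
      · exact ⟨gd_positive _, Fml.positive_subst (gd_positive _) (Fml.starSub_pos σ)⟩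
    have hBc : Fml.imp (Fml.imp ((gd B.vars).subst (Fml.starSub σ)) (B.subst σ).tr)
        (Fml.imp (Fml.imp (gd π) ((gd B.vars).subst (Fml.starSub σ)))
          (Fml.imp (gd π) (B.subst σ).tr)) ∈ P :=
      mem_P_of_IntL hP (tautB ((gd B.vars).subst (Fml.starSub σ)) (B.subst σ).tr (gd π))
        ⟨⟨Fml.positive_subst (gd_positive _) (Fml.starSub_pos σ), Fml.tr_positive _⟩,
          ⟨gd_positive _, Fml.positive_subst (gd_positive _) (Fml.starSub_pos σ)⟩,
          gd_positive _, Fml.tr_positive _⟩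
    exact hP.mp _ _ (hP.mp _ _ hBc h2) hW

lemma SLog_gamma {P : Set Fml} (hP : IsPosLogic P) {Γ : Set Fml} (hΓ : Γ ⊆ PosFml)
    (hΓP : Γ ⊆ P) : Γ ⊆ SLog P := by
  intro G hG π hπ
  have hGpos : G.Positive := hΓ hG
  have h1 : G.tr ∈ P := by
    rw [tr_eq_subst_shift hGpos]
    exact hP.subst_closed G (hΓP hG) _ (fun n => trivial)
  have hK : Fml.imp G.tr (Fml.imp (gd π) G.tr) ∈ P :=
    mem_P_of_IntL hP (tautK G.tr (gd π))
      ⟨Fml.tr_positive _, gd_positive _, Fml.tr_positive _⟩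
  exact hP.mp _ _ hK h1

lemma hard_dir {Γ : Set Fml} (hΓ : Γ ⊆ PosFml) {A : Fml} (h1 : A ∈ IntPlus Γ)
    (h2 : A.Positive) : A ∈ IntPosPlus Γ := by
  apply Set.mem_sInter.mpr
  rintro P ⟨hP, hΓP⟩
  have hAS : A ∈ SLog P :=
    Set.mem_sInter.mp h1 (SLog P) ⟨SLog_isSI hP, SLog_gamma hP hΓ hΓP⟩
  have h4 : Fml.imp (gd A.vars) A.tr ∈ P := hAS A.vars (le_refl _)
  set υ : ℕ → Fml := fun k => match k with
    | 0 => conjOf A.vars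
    | n + 1 => Fml.var n
    with hυdef
  have hυ : PosSubst υ := by
    intro k
    cases k with
    | zero => exact conjOf_positive _
    | succ n => trivial
  have h5 := hP.subst_closed _ h4 υ hυ
  have h6 : (A.tr).subst υ = A := Fml.untr (fun n => rfl) h2
  rw [show (Fml.imp (gd A.vars) A.tr).subst υ
      = Fml.imp ((gd A.vars).subst υ) A from by simp [Fml.subst, h6]] at h5
  have h7 : (gd A.vars).subst υ ∈ P := by
    apply mem_P_of_IntL hP
    · intro α _ ν
      show ((υ 0).evalB ⊥ ν) ⇨ ((shiftConj A.vars).subst υ).evalB ⊥ ν = ⊤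
      rw [himp_eq_top_iff]
      apply conjList_subst_ge
      intro k hk
      rcases List.mem_map.mp hk with ⟨m, hm', rfl⟩
      show (conjList (A.vars.sort (· ≤ ·))).evalB ⊥ ν ≤ (Fml.var m).evalB ⊥ ν
      exact conjList_le ⊥ ν _ m hm'
    · exact Fml.positive_subst (gd_positive _) hυ
  exact hP.mp _ _ h5 h7

lemma IntPlus_isSI (Γ : Set Fml) : IsSILogic (IntPlus Γ) := by
  constructor
  · intro x hx
    exact Set.mem_sInter.mpr fun L hL => hL.1.int_sub hx
  · intro A B h1 h2
    exact Set.mem_sInter.mpr fun L hL =>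
      hL.1.mp A B (Set.mem_sInter.mp h1 L hL) (Set.mem_sInter.mp h2 L hL)
  · intro A h σ
    exact Set.mem_sInter.mpr fun L hL => hL.1.subst_closed A (Set.mem_sInter.mp h L hL) σ

lemma gamma_sub_IntPlus (Γ : Set Fml) : Γ ⊆ IntPlus Γ :=
  fun _ hg => Set.mem_sInter.mpr fun _ hL => hL.2 hg

lemma easy_isPos {Γ : Set Fml} (hΓ : Γ ⊆ PosFml) :
    IsPosLogic (IntPlus Γ ∩ PosFml) := by
  constructor
  · exact Set.inter_subset_right
  · rintro x ⟨h1, h2⟩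
    exact ⟨(IntPlus_isSI Γ).int_sub h1, h2⟩
  · rintro A B ⟨h1, h1p⟩ ⟨h2, h2p⟩
    exact ⟨(IntPlus_isSI Γ).mp A B h1 h2, h1p.2⟩
  · rintro A ⟨h1, h1p⟩ σ hσ
    exact ⟨(IntPlus_isSI Γ).subst_closed A h1 σ, Fml.positive_subst h1p hσ⟩

/-- for any set Γ of positive formulas, (Int + Γ) ∩ Fml⁺ = Int⁺ + Γ. -/
theorem stmt5 (Γ : Set Fml) (hΓ : Γ ⊆ PosFml) :
    IntPlus Γ ∩ PosFml = IntPosPlus Γ := by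
  ext A
  constructor
  · rintro ⟨h1, h2⟩
    exact hard_dir hΓ h1 h2
  · intro h
    exact Set.mem_sInter.mp h (IntPlus Γ ∩ PosFml)
      ⟨easy_isPos hΓ, fun g hg => ⟨gamma_sub_IntPlus Γ hg, hΓ hg⟩⟩
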